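/- Let ρ ≠ 0, σ = ±1, s₁ ∈ ℂ with real and imaginary parts s₁R, s₁I, K = 2ρs₁ + iσ, ξ = x + 2σρt, η = x − 2σρt. The first-order rational solution u₁(x,t) = ρ e^{2iρ²t+iφ}[1 − (2ρξ + K − iσ)(2ρη − K* + iσ)/(2ρ²ξη + ρKη − ρK*ξ − (|K|²+1)/2)] is nonsingular for all (x,t) ∈ ℝ² if and only if s₁I ≠ −σ/(2ρ). -/

import Mathlib

open Complex

/-- The first-order rational solution of the defocusing nonlocal NLS equation is
nonsingular on ℝ² if and only if `Im s₁ ≠ −σ/(2ρ)`: its denominator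
`D(x,t) = 2ρ²ξη + ρKη − ρK*ξ − (|K|²+1)/2` never vanishes iff `Im s₁ ≠ −σ/(2ρ)`. -/
theorem first_order_rational_nonsingular_iff (ρ σ : ℝ) (hρ : ρ ≠ 0)
    (hσ : σ = 1 ∨ σ = -1) (s1 : ℂ) :
    (∀ x t : ℝ,
      (2 * (ρ : ℂ) ^ 2 * ((x : ℂ) + 2 * σ * ρ * t) * ((x : ℂ) - 2 * σ * ρ * t)
        + (ρ : ℂ) * (2 * ρ * s1 + Complex.I * σ) * ((x : ℂ) - 2 * σ * ρ * t)
        - (ρ : ℂ) * (starRingEnd ℂ) (2 * ρ * s1 + Complex.I * σ) * ((x : ℂ) + 2 * σ * ρ * t)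
        - ((Complex.normSq (2 * ρ * s1 + Complex.I * σ) : ℂ) + 1) / 2) ≠ 0)
    ↔ s1.im ≠ -σ / (2 * ρ) := by
  have him : ∀ x t : ℝ,
      (2 * (ρ : ℂ) ^ 2 * ((x : ℂ) + 2 * σ * ρ * t) * ((x : ℂ) - 2 * σ * ρ * t)
        + (ρ : ℂ) * (2 * ρ * s1 + Complex.I * σ) * ((x : ℂ) - 2 * σ * ρ * t)
        - (ρ : ℂ) * (starRingEnd ℂ) (2 * ρ * s1 + Complex.I * σ) * ((x : ℂ) + 2 * σ * ρ * t)
        - ((Complex.normSq (2 * ρ * s1 + Complex.I * σ) : ℂ) + 1) / 2).im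
      = 2 * ρ * (2 * ρ * s1.im + σ) * x := by
    intro x t
    simp [Complex.ext_iff, Complex.normSq_apply, pow_two]
    ring
  have hre : ∀ x t : ℝ,
      (2 * (ρ : ℂ) ^ 2 * ((x : ℂ) + 2 * σ * ρ * t) * ((x : ℂ) - 2 * σ * ρ * t)
        + (ρ : ℂ) * (2 * ρ * s1 + Complex.I * σ) * ((x : ℂ) - 2 * σ * ρ * t)
        - (ρ : ℂ) * (starRingEnd ℂ) (2 * ρ * s1 + Complex.I * σ) * ((x : ℂ) + 2 * σ * ρ * t)
        - ((Complex.normSq (2 * ρ * s1 + Complex.I * σ) : ℂ) + 1) / 2).re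
      = 2 * ρ^2 * (x^2 - 4*σ^2*ρ^2*t^2) - 4*(2*ρ*s1.re)*σ*ρ^2*t
        - ((2*ρ*s1.re)^2 + (2*ρ*s1.im+σ)^2 + 1)/2 := by
    intro x t
    simp [Complex.ext_iff, Complex.normSq_apply, pow_two]
    ring
  have hσ2 : σ^2 = 1 := by rcases hσ with h | h <;> rw [h] <;> norm_num
  constructor
  · intro hns
    intro heq
    -- then b = 0, exhibit a zero
    have hb : 2 * ρ * s1.im + σ = 0 := by
      rw [heq]; field_simp; ring
    set a : ℝ := 2 * ρ * s1.re with ha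
    set x : ℝ := Real.sqrt (a^2 + 1) / (2 * ρ) with hx
    have hD := hns x 0
    apply hD
    rw [Complex.ext_iff]
    constructor
    · rw [hre x 0]
      have hsq : Real.sqrt (a^2 + 1) ^ 2 = a^2 + 1 :=
        Real.sq_sqrt (by positivity)
      rw [hx]
      rw [hb]
      field_simp
      nlinarith [hsq, sq_nonneg ρ, Complex.zero_re]
    · rw [him x 0, hb]
      simp
  · intro h x t hD
    have hb : 2 * ρ * s1.im + σ ≠ 0 := by
      intro hb
      apply h
      field_simp
      linarith
    have hi : (2 * (ρ : ℂ) ^ 2 * ((x : ℂ) + 2 * σ * ρ * t) * ((x : ℂ) - 2 * σ * ρ * t)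
        + (ρ : ℂ) * (2 * ρ * s1 + Complex.I * σ) * ((x : ℂ) - 2 * σ * ρ * t)
        - (ρ : ℂ) * (starRingEnd ℂ) (2 * ρ * s1 + Complex.I * σ) * ((x : ℂ) + 2 * σ * ρ * t)
        - ((Complex.normSq (2 * ρ * s1 + Complex.I * σ) : ℂ) + 1) / 2).im = 0 := by
      rw [hD]; simp
    have hr : (2 * (ρ : ℂ) ^ 2 * ((x : ℂ) + 2 * σ * ρ * t) * ((x : ℂ) - 2 * σ * ρ * t)
        + (ρ : ℂ) * (2 * ρ * s1 + Complex.I * σ) * ((x : ℂ) - 2 * σ * ρ * t)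
        - (ρ : ℂ) * (starRingEnd ℂ) (2 * ρ * s1 + Complex.I * σ) * ((x : ℂ) + 2 * σ * ρ * t)
        - ((Complex.normSq (2 * ρ * s1 + Complex.I * σ) : ℂ) + 1) / 2).re = 0 := by
      rw [hD]; simp
    rw [him x t] at hi
    rw [hre x t] at hr
    have hx0 : x = 0 := by
      rcases mul_eq_zero.mp hi with h1 | h2
      · rcases mul_eq_zero.mp h1 with h3 | h4
        · norm_num at h3; exact absurd h3 hρ
        · exact absurd h4 hb
      · exact h2
    subst hx0
    rcases hσ with rfl | rfl <;>
    nlinarith [sq_nonneg (4*ρ^2*t + 2*ρ*s1.re), sq_nonneg (4*ρ^2*t - 2*ρ*s1.re), sq_nonneg (2*ρ*s1.im+1), sq_nonneg (2*ρ*s1.im-1)]
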